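/- arXiv:1406.1530 — 4 statements merged into one kernel-verified Lean document; each statement's English description precedes it below -/
import Mathlib

section
/- Let r ≥ 3 be an integer. Then there exists a set T ⊆ [r]³ of exactly r² − r triples such that: (1) each triple in T consists of three distinct elements; (2) each i ∈ [r] appears as an element in exactly 3(r−1) triples of T; (3) for every pair of distinct i, j ∈ [r], at most 6 triples of T contain both i and j. -/
lemma card_le_six {α : Type*} [DecidableEq α] (a b c d e f : α) :
    ({a, b, c, d, e, f} : Finset α).card ≤ 6 := by
  simpa using [a, b, c, d, e, f].toFinset_card_le

theorem main_gen (r : ℕ) (hr : 3 ≤ r) (f : Fin r → Fin r → Fin r)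
    (idem : ∀ i, f i i = i)
    (rowInj : ∀ i, Function.Injective (f i))
    (colInj : ∀ j, Function.Injective (fun i => f i j)) :
    ∃ T : Finset (Fin r × Fin r × Fin r),
      T.card = r ^ 2 - r ∧
      (∀ t ∈ T, t.1 ≠ t.2.1 ∧ t.1 ≠ t.2.2 ∧ t.2.1 ≠ t.2.2) ∧
      (∀ i : Fin r,
        (T.filter (fun t => t.1 = i ∨ t.2.1 = i ∨ t.2.2 = i)).card = 3 * (r - 1)) ∧
      (∀ i j : Fin r, i ≠ j →
        (T.filter (fun t => (t.1 = i ∨ t.2.1 = i ∨ t.2.2 = i) ∧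
          (t.1 = j ∨ t.2.1 = j ∨ t.2.2 = j))).card ≤ 6) := by
  haveI : NeZero r := ⟨by omega⟩
  classical
  have rowBij : ∀ i, Function.Bijective (f i) := fun i =>
    Finite.injective_iff_bijective.mp (rowInj i)
  have colBij : ∀ j, Function.Bijective (fun i => f i j) := fun j =>
    Finite.injective_iff_bijective.mp (colInj j)
  -- inverse along rows: f x (ginv x z) = z
  obtain ⟨grow, hgrow⟩ : ∃ g : Fin r → Fin r → Fin r, ∀ x z, f x (g x z) = z := by
    refine ⟨fun x => (Equiv.ofBijective (f x) (rowBij x)).symm, fun x z => ?_⟩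
    exact (Equiv.ofBijective (f x) (rowBij x)).apply_symm_apply z
  obtain ⟨gcol, hgcol⟩ : ∃ g : Fin r → Fin r → Fin r, ∀ y z, f (g y z) y = z := by
    refine ⟨fun y => (Equiv.ofBijective (fun x => f x y) (colBij y)).symm, fun y z => ?_⟩
    exact (Equiv.ofBijective (fun x => f x y) (colBij y)).apply_symm_apply z
  have hne1 : ∀ x y : Fin r, x ≠ y → f x y ≠ x := by
    intro x y hxy h
    exact hxy (rowInj x (h.trans (idem x).symm)).symm
  have hne2 : ∀ x y : Fin r, x ≠ y → f x y ≠ y := by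
    intro x y hxy h
    exact hxy (colInj y (h.trans (idem y).symm))
  set T : Finset (Fin r × Fin r × Fin r) :=
    Finset.univ.filter (fun t : Fin r × Fin r × Fin r => t.1 ≠ t.2.1 ∧ t.2.2 = f t.1 t.2.1)
    with hT
  have memT : ∀ t : Fin r × Fin r × Fin r, t ∈ T ↔ t.1 ≠ t.2.1 ∧ t.2.2 = f t.1 t.2.1 := by
    intro t; simp [hT]
  refine ⟨T, ?_, ?_, ?_, ?_⟩
  · -- cardinality
    have : T.card = (Finset.univ : Finset (Fin r)).offDiag.card := by
      apply Finset.card_nbij' (fun t => (t.1, t.2.1)) (fun p => (p.1, p.2, f p.1 p.2))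
      · intro t ht
        rw [Finset.mem_coe, memT] at ht
        simp [Finset.mem_offDiag, ht.1]
      · intro p hp
        simp [Finset.mem_offDiag] at hp
        rw [Finset.mem_coe, memT]
        exact ⟨hp, rfl⟩
      · intro t ht
        rw [Finset.mem_coe, memT] at ht
        exact Prod.ext rfl (Prod.ext rfl ht.2.symm)
      · intro p hp; rfl
    rw [this, Finset.offDiag_card]
    simp [sq]
  · -- distinctness
    intro t ht
    rw [memT] at ht
    exact ⟨ht.1, fun h => hne1 t.1 t.2.1 ht.1 (ht.2 ▸ h.symm),
      fun h => hne2 t.1 t.2.1 ht.1 (ht.2 ▸ h.symm)⟩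
  · -- degree
    intro i
    have hsplit : T.filter (fun t => t.1 = i ∨ t.2.1 = i ∨ t.2.2 = i)
        = T.filter (fun t => t.1 = i) ∪ (T.filter (fun t => t.2.1 = i)
          ∪ T.filter (fun t => t.2.2 = i)) := by
      rw [← Finset.filter_or, ← Finset.filter_or]
    have hdj : ∀ (P Q : Fin r × Fin r × Fin r → Prop) [DecidablePred P] [DecidablePred Q],
        (∀ t ∈ T, P t → Q t → False) → Disjoint (T.filter P) (T.filter Q) := by
      intro P Q _ _ h
      rw [Finset.disjoint_left]
      intro t ht1 ht2
      rw [Finset.mem_filter] at ht1 ht2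
      exact h t ht1.1 ht1.2 ht2.2
    have d12 : Disjoint (T.filter (fun t => t.1 = i)) (T.filter (fun t => t.2.1 = i)) := by
      apply hdj
      intro t ht h1 h2
      exact ((memT t).mp ht).1 (h1.trans h2.symm)
    have d13 : Disjoint (T.filter (fun t => t.1 = i)) (T.filter (fun t => t.2.2 = i)) := by
      apply hdj
      intro t ht h1 h2
      obtain ⟨hne, heq⟩ := (memT t).mp ht
      exact hne1 t.1 t.2.1 hne (heq ▸ (h2.trans h1.symm))
    have d23 : Disjoint (T.filter (fun t => t.2.1 = i)) (T.filter (fun t => t.2.2 = i)) := by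
      apply hdj
      intro t ht h1 h2
      obtain ⟨hne, heq⟩ := (memT t).mp ht
      exact hne2 t.1 t.2.1 hne (heq ▸ (h2.trans h1.symm))
    have c1 : (T.filter (fun t => t.1 = i)).card = r - 1 := by
      have : (T.filter (fun t => t.1 = i)).card = (Finset.univ.erase i).card := by
        apply Finset.card_nbij' (fun t => t.2.1) (fun j => (i, j, f i j))
        · intro t ht
          rw [Finset.mem_coe, Finset.mem_filter, memT] at ht
          simp [Finset.mem_erase]
          exact fun h => ht.1.1 (ht.2.trans h.symm)
        · intro j hj
          simp only [Finset.mem_coe, Finset.mem_erase] at hj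
          rw [Finset.mem_coe, Finset.mem_filter, memT]
          exact ⟨⟨fun h => hj.1 h.symm, rfl⟩, rfl⟩
        · intro t ht
          rw [Finset.mem_coe, Finset.mem_filter, memT] at ht
          refine Prod.ext ht.2.symm (Prod.ext rfl ?_)
          simp only
          rw [ht.1.2, ht.2]
        · intro j hj; rfl
      rw [this, Finset.card_erase_of_mem (Finset.mem_univ i)]
      simp
    have c2 : (T.filter (fun t => t.2.1 = i)).card = r - 1 := by
      have : (T.filter (fun t => t.2.1 = i)).card = (Finset.univ.erase i).card := by
        apply Finset.card_nbij' (fun t => t.1) (fun j => (j, i, f j i))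
        · intro t ht
          rw [Finset.mem_coe, Finset.mem_filter, memT] at ht
          simp [Finset.mem_erase]
          exact fun h => ht.1.1 (h.trans ht.2.symm)
        · intro j hj
          simp only [Finset.mem_coe, Finset.mem_erase] at hj
          rw [Finset.mem_coe, Finset.mem_filter, memT]
          exact ⟨⟨fun h => hj.1 h, rfl⟩, rfl⟩
        · intro t ht
          rw [Finset.mem_coe, Finset.mem_filter, memT] at ht
          refine Prod.ext rfl (Prod.ext ht.2.symm ?_)
          simp only
          rw [ht.1.2, ht.2]
        · intro j hj; rfl
      rw [this, Finset.card_erase_of_mem (Finset.mem_univ i)]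
      simp
    have c3 : (T.filter (fun t => t.2.2 = i)).card = r - 1 := by
      have : (T.filter (fun t => t.2.2 = i)).card = (Finset.univ.erase i).card := by
        apply Finset.card_nbij' (fun t => t.1) (fun x => (x, grow x i, i))
        · intro t ht
          rw [Finset.mem_coe, Finset.mem_filter, memT] at ht
          simp only [Finset.mem_coe, Finset.mem_erase, Finset.mem_univ, and_true]
          intro h
          -- t.1 = i, f t.1 t.2.1 = i
          apply ht.1.1
          apply rowInj t.1
          rw [← ht.1.2, ht.2, h, idem]
        · intro x hx
          simp only [Finset.mem_coe, Finset.mem_erase] at hx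
          rw [Finset.mem_coe, Finset.mem_filter, memT]
          refine ⟨⟨?_, (hgrow x i).symm⟩, rfl⟩
          simp only
          intro h
          apply hx.1
          have h2 := hgrow x i
          rw [← h, idem] at h2
          exact h2
        · intro t ht
          rw [Finset.mem_coe, Finset.mem_filter, memT] at ht
          refine Prod.ext rfl (Prod.ext ?_ ht.2.symm)
          simp only
          apply rowInj t.1
          rw [hgrow, ← ht.1.2, ht.2]
        · intro x hx; rfl
      rw [this, Finset.card_erase_of_mem (Finset.mem_univ i)]
      simp
    rw [hsplit, Finset.card_union_of_disjoint, Finset.card_union_of_disjoint d23,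
      c1, c2, c3]
    · omega
    · rw [Finset.disjoint_union_right]; exact ⟨d12, d13⟩
  · -- pair bound
    intro i j hij
    have hsub : T.filter (fun t => (t.1 = i ∨ t.2.1 = i ∨ t.2.2 = i) ∧
          (t.1 = j ∨ t.2.1 = j ∨ t.2.2 = j)) ⊆
        ({(i, j, f i j), (i, grow i j, j), (j, i, f j i), (j, grow j i, i),
          (gcol i j, i, j), (gcol j i, j, i)} : Finset (Fin r × Fin r × Fin r)) := by
      intro t ht
      rw [Finset.mem_filter, memT] at ht
      obtain ⟨⟨hne, heq⟩, hi, hj⟩ := ht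
      obtain ⟨x, y, z⟩ := t
      simp only at hne heq hi hj
      subst heq
      simp only [Finset.mem_insert, Finset.mem_singleton, Prod.mk.injEq]
      rcases hi with hi | hi | hi
      · rcases hj with hj | hj | hj
        · exact absurd (hi.symm.trans hj) hij
        · exact Or.inl ⟨hi, hj, by rw [hi, hj]⟩
        · refine Or.inr (Or.inl ⟨hi, ?_, hj⟩)
          apply rowInj i
          rw [hgrow, ← hi, hj]
      · rcases hj with hj | hj | hj
        · exact Or.inr (Or.inr (Or.inl ⟨hj, hi, by rw [hj, hi]⟩))
        · exact absurd (hi.symm.trans hj) hij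
        · refine Or.inr (Or.inr (Or.inr (Or.inr (Or.inl ⟨?_, hi, hj⟩))))
          apply colInj i
          simp only
          rw [hgcol, ← hi, hj]
      · rcases hj with hj | hj | hj
        · refine Or.inr (Or.inr (Or.inr (Or.inl ⟨hj, ?_, hi⟩)))
          apply rowInj j
          rw [hgrow, ← hj, hi]
        · refine Or.inr (Or.inr (Or.inr (Or.inr (Or.inr ⟨?_, hj, hi⟩))))
          apply colInj j
          simp only
          rw [hgcol, ← hj, hi]
        · exact absurd (hi.symm.trans hj) hij
    calc _ ≤ _ := Finset.card_le_card hsub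
    _ ≤ 6 := card_le_six _ _ _ _ _ _

section OddCase

lemma odd_construction (r : ℕ) (hr : 3 ≤ r) (ho : Odd r) :
    ∃ f : Fin r → Fin r → Fin r,
      (∀ i, f i i = i) ∧ (∀ i, Function.Injective (f i)) ∧
      (∀ j, Function.Injective (fun i => f i j)) := by
  haveI : NeZero r := ⟨by omega⟩
  let e : ZMod r ≃ Fin r := Fintype.equivFinOfCardEq (ZMod.card r)
  have h2 : IsUnit (2 : ZMod r) := by
    have : ((2 : ℕ) : ZMod r) = (2 : ZMod r) := by push_cast; ring
    rw [← this, ZMod.isUnit_iff_coprime]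
    exact ho.coprime_two_left
  refine ⟨fun i j => e (2 * e.symm i - e.symm j), ?_, ?_, ?_⟩
  · intro i
    show e (2 * e.symm i - e.symm i) = i
    have h : 2 * e.symm i - e.symm i = e.symm i := by ring
    rw [h, e.apply_symm_apply]
  · intro i a b h
    have h1 := e.injective h
    have h2' : e.symm a = e.symm b := by linear_combination -h1
    exact e.symm.injective h2'
  · intro j a b h
    simp only at h
    have h1 := e.injective h
    have h3 : 2 * e.symm a = 2 * e.symm b := by linear_combination h1
    exact e.symm.injective (h2.mul_left_cancel h3)

end OddCase

section EvenCase

lemma even_construction (r : ℕ) (hr : 3 ≤ r) (he : Even r) :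
    ∃ f : Fin r → Fin r → Fin r,
      (∀ i, f i i = i) ∧ (∀ i, Function.Injective (f i)) ∧
      (∀ j, Function.Injective (fun i => f i j)) := by
  set m := r - 1 with hm
  have hm3 : 3 ≤ m := by
    rcases he with ⟨k, hk⟩; omega
  haveI : NeZero m := ⟨by omega⟩
  haveI : Fact (1 < m) := ⟨by omega⟩
  have hmodd : Odd m := by
    rcases he with ⟨k, hk⟩
    exact ⟨k - 1, by omega⟩
  have h2 : IsUnit (2 : ZMod m) := by
    have h' : ((2 : ℕ) : ZMod m) = (2 : ZMod m) := by push_cast; ring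
    rw [← h', ZMod.isUnit_iff_coprime]
    exact hmodd.coprime_two_left
  obtain ⟨u, hu⟩ := isUnit_iff_exists_inv.mp h2
  -- hu : 2 * u = 1
  let e : Option (ZMod m) ≃ Fin r :=
    Fintype.equivFinOfCardEq (by rw [Fintype.card_option, ZMod.card]; omega)
  let F : Option (ZMod m) → Option (ZMod m) → Option (ZMod m) := fun a b =>
    match a, b with
    | none, none => none
    | none, some y => some (y + u)
    | some x, none => some (x - u)
    | some x, some y => if x - y = 1 then none else some ((x + y) * u)
  have Fidem : ∀ a, F a a = a := by
    intro a
    match a with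
    | none => rfl
    | some x =>
      show (if x - x = 1 then none else some ((x + x) * u)) = some x
      rw [if_neg (by simp)]
      congr 1
      linear_combination x * hu
  have Frow : ∀ a, Function.Injective (F a) := by
    intro a b c h
    match a, b, c with
    | none, none, none => rfl
    | none, none, some z => simp [F] at h
    | none, some y, none => simp [F] at h
    | none, some y, some z =>
      simp only [F, Option.some.injEq] at h
      congr 1
      linear_combination h
    | some x, none, none => rfl
    | some x, none, some z =>
      exfalso
      simp only [F] at h
      split_ifs at h with hc
      rw [Option.some.injEq] at h
      exact hc (by linear_combination 2 * h + (1 + x + z) * hu)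
    | some x, some y, none =>
      exfalso
      simp only [F] at h
      split_ifs at h with hc
      rw [Option.some.injEq] at h
      exact hc (by linear_combination -2 * h + (1 + x + y) * hu)
    | some x, some y, some z =>
      simp only [F] at h
      split_ifs at h with hc1 hc2
      · congr 1; linear_combination hc2 - hc1
      · rw [Option.some.injEq] at h
        congr 1
        linear_combination 2 * h - (y - z) * hu
  have Fcol : ∀ b, Function.Injective (fun a => F a b) := by
    intro b a c h
    simp only at h
    match a, c, b with
    | none, none, _ => rfl
    | none, some y, none => simp [F] at h
    | some x, none, none => simp [F] at h
    | some x, some y, none =>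
      simp only [F, Option.some.injEq] at h
      congr 1
      linear_combination h
    | none, some x, some y =>
      exfalso
      simp only [F] at h
      split_ifs at h with hc
      rw [Option.some.injEq] at h
      exact hc (by linear_combination -2 * h + (1 - x - y) * hu)
    | some x, none, some y =>
      exfalso
      simp only [F] at h
      split_ifs at h with hc
      rw [Option.some.injEq] at h
      exact hc (by linear_combination 2 * h + (1 - x - y) * hu)
    | some x1, some x2, some y =>
      simp only [F] at h
      split_ifs at h with hc1 hc2
      · congr 1; linear_combination hc1 - hc2
      · rw [Option.some.injEq] at h
        congr 1
        linear_combination 2 * h - (x1 - x2) * hu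
  refine ⟨fun i j => e (F (e.symm i) (e.symm j)), ?_, ?_, ?_⟩
  · intro i
    show e (F (e.symm i) (e.symm i)) = i
    rw [Fidem, e.apply_symm_apply]
  · intro i a b h
    exact e.symm.injective (Frow _ (e.injective h))
  · intro j a b h
    simp only at h
    exact e.symm.injective (Fcol _ (e.injective h))

end EvenCase

theorem stmt_0 (r : ℕ) (hr : 3 ≤ r) :
    ∃ T : Finset (Fin r × Fin r × Fin r),
      T.card = r ^ 2 - r ∧
      (∀ t ∈ T, t.1 ≠ t.2.1 ∧ t.1 ≠ t.2.2 ∧ t.2.1 ≠ t.2.2) ∧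
      (∀ i : Fin r,
        (T.filter (fun t => t.1 = i ∨ t.2.1 = i ∨ t.2.2 = i)).card = 3 * (r - 1)) ∧
      (∀ i j : Fin r, i ≠ j →
        (T.filter (fun t => (t.1 = i ∨ t.2.1 = i ∨ t.2.2 = i) ∧
          (t.1 = j ∨ t.2.1 = j ∨ t.2.2 = j))).card ≤ 6) := by
  rcases Nat.even_or_odd r with he | ho
  · obtain ⟨f, h1, h2, h3⟩ := even_construction r hr he
    exact main_gen r hr f h1 h2 h3
  · obtain ⟨f, h1, h2, h3⟩ := odd_construction r hr ho
    exact main_gen r hr f h1 h2 h3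
end

section
/- Let A be an m × n complex matrix that is a (q,k,t)-design matrix with k > 0. Then rank(A) ≥ n − n·t·q·(q−1)/k. -/
open scoped Classical

open scoped ComplexOrder
open Finset Matrix

variable {m n : ℕ}

noncomputable def colsum (B : Matrix (Fin m) (Fin n) ℝ) (u : Fin m → ℝ) (j : Fin n) : ℝ :=
  ∑ i, B i j * Real.exp (u i)

lemma colsum_pos (B : Matrix (Fin m) (Fin n) ℝ) (hB : ∀ i j, 0 ≤ B i j)
    (hcol : ∀ j, ∃ i, B i j ≠ 0) (u : Fin m → ℝ) (j : Fin n) : 0 < colsum B u j := by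
  obtain ⟨i0, hi0⟩ := hcol j
  exact Finset.sum_pos' (fun i _ => mul_nonneg (hB i j) (Real.exp_pos _).le)
    ⟨i0, mem_univ _, mul_pos ((hB i0 j).lt_of_ne (Ne.symm hi0)) (Real.exp_pos _)⟩

noncomputable def gfun (c : ℝ) (B : Matrix (Fin m) (Fin n) ℝ) (u : Fin m → ℝ) : ℝ :=
  (∑ j, Real.log (colsum B u j)) - c * ∑ i, u i

lemma gfun_lb (q k : ℕ) (hk : 0 < k) (B : Matrix (Fin m) (Fin n) ℝ) (hB : ∀ i j, 0 ≤ B i j)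
    (hrow : ∀ i, (univ.filter fun j => B i j ≠ 0).card ≤ q)
    (hcol : ∀ j, k ≤ (univ.filter fun i => B i j ≠ 0).card) :
    ∃ L : ℝ, ∀ u : Fin m → ℝ, (∀ i, u i ≤ 0) → L ≤ gfun ((q : ℝ) / k) B u := by
  classical
  set supp : Fin n → Finset (Fin m) := fun j => univ.filter fun i => B i j ≠ 0 with hsupp
  have hne : ∀ j, (supp j).Nonempty := by
    intro j
    rw [← Finset.card_pos]
    exact lt_of_lt_of_le hk (hcol j)
  set bmin : Fin n → ℝ := fun j => ((supp j).image fun i => B i j).min' ((hne j).image _)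
    with hbmin
  have hbmin_le : ∀ j, ∀ i ∈ supp j, bmin j ≤ B i j := by
    intro j i hi
    exact Finset.min'_le _ _ (Finset.mem_image_of_mem _ hi)
  have hbmin_pos : ∀ j, 0 < bmin j := by
    intro j
    obtain ⟨i, hi, hval⟩ := Finset.mem_image.mp (((supp j).image fun i => B i j).min'_mem ((hne j).image _))
    have hBne : B i j ≠ 0 := (Finset.mem_filter.mp hi).2
    have h0 : 0 < B i j := (hB i j).lt_of_ne (Ne.symm hBne)
    rw [hbmin]
    exact lt_of_lt_of_eq h0 hval
  refine ⟨∑ j, Real.log (bmin j), ?_⟩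
  intro u hu
  -- per-column bound
  have hcolbd : ∀ j, Real.log (bmin j) + (1 / (k:ℝ)) * ∑ i ∈ supp j, u i
      ≤ Real.log (colsum B u j) := by
    intro j
    obtain ⟨i0, hi0, hmax⟩ := Finset.exists_max_image (supp j) u (hne j)
    have h1 : bmin j * Real.exp (u i0) ≤ colsum B u j := by
      have : B i0 j * Real.exp (u i0) ≤ colsum B u j :=
        Finset.single_le_sum (f := fun i => B i j * Real.exp (u i))
          (fun i _ => mul_nonneg (hB i j) (Real.exp_pos _).le) (mem_univ i0)
      have h2 : bmin j * Real.exp (u i0) ≤ B i0 j * Real.exp (u i0) :=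
        mul_le_mul_of_nonneg_right (hbmin_le j i0 hi0) (Real.exp_pos _).le
      linarith
    have hlog : Real.log (bmin j) + u i0 ≤ Real.log (colsum B u j) := by
      have := Real.log_le_log (mul_pos (hbmin_pos j) (Real.exp_pos _)) h1
      rwa [Real.log_mul (hbmin_pos j).ne' (Real.exp_pos _).ne', Real.log_exp] at this
    have havg : (1 / (k:ℝ)) * ∑ i ∈ supp j, u i ≤ u i0 := by
      have hsum_le : ∑ i ∈ supp j, u i ≤ ((supp j).card : ℝ) * u i0 := by
        have := Finset.sum_le_card_nsmul (supp j) u (u i0) (fun i hi => hmax i hi)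
        rwa [nsmul_eq_mul] at this
      have hcard : ((k:ℝ)) ≤ ((supp j).card : ℝ) := by exact_mod_cast hcol j
      have hui0 : u i0 ≤ 0 := hu i0
      have h3 : ((supp j).card : ℝ) * u i0 ≤ (k:ℝ) * u i0 :=
        mul_le_mul_of_nonpos_right hcard hui0
      have hk' : (0:ℝ) < (k:ℝ) := by exact_mod_cast hk
      rw [div_mul_eq_mul_div, one_mul, div_le_iff₀ hk']
      calc ∑ i ∈ supp j, u i ≤ (k:ℝ) * u i0 := le_trans hsum_le h3
        _ = u i0 * k := mul_comm _ _
    linarith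
  -- swap double sum
  have hswap : ∑ j, ∑ i ∈ supp j, u i
      = ∑ i, ((univ.filter fun j => B i j ≠ 0).card : ℝ) * u i := by
    rw [Finset.sum_comm' (t' := univ) (s' := fun i => univ.filter fun j => B i j ≠ 0)]
    · apply Finset.sum_congr rfl
      intro i _
      rw [Finset.sum_const, nsmul_eq_mul]
    · intro i j
      simp [hsupp, and_comm]
  have hrowbd : (q : ℝ) * ∑ i, u i ≤ ∑ j, ∑ i ∈ supp j, u i := by
    rw [hswap, Finset.mul_sum]
    apply Finset.sum_le_sum
    intro i _
    apply mul_le_mul_of_nonpos_right _ (hu i)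
    exact_mod_cast hrow i
  have hk' : (0:ℝ) < (k:ℝ) := by exact_mod_cast hk
  have hsum : ∑ j, (Real.log (bmin j) + (1 / (k:ℝ)) * ∑ i ∈ supp j, u i)
      ≤ ∑ j, Real.log (colsum B u j) := Finset.sum_le_sum fun j _ => hcolbd j
  rw [Finset.sum_add_distrib, ← Finset.mul_sum] at hsum
  have : ((q:ℝ)/k) * ∑ i, u i ≤ (1 / (k:ℝ)) * ∑ j, ∑ i ∈ supp j, u i := by
    rw [div_mul_eq_mul_div, div_mul_eq_mul_div, one_mul, div_le_div_iff₀ hk' hk']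
    nlinarith [mul_le_mul_of_nonneg_right hrowbd hk'.le]
  unfold gfun
  linarith

set_option maxHeartbeats 1000000 in
lemma exists_scaling (q k : ℕ) (hq : 2 ≤ q) (hk : 0 < k)
    (B : Matrix (Fin m) (Fin n) ℝ) (hB : ∀ i j, 0 ≤ B i j)
    (hrow : ∀ i, (univ.filter fun j => B i j ≠ 0).card ≤ q)
    (hcol : ∀ j, k ≤ (univ.filter fun i => B i j ≠ 0).card) :
    ∃ u : Fin m → ℝ, (∀ i, u i ≤ 0) ∧
      ∀ i, (∑ j, B i j * Real.exp (u i) / colsum B u j) ≤ (q : ℝ)^2 / k := by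
  classical
  have hcolne : ∀ j, ∃ i, B i j ≠ 0 := by
    intro j
    have h := lt_of_lt_of_le hk (hcol j)
    rw [Finset.card_pos] at h
    obtain ⟨i, hi⟩ := h
    exact ⟨i, (Finset.mem_filter.mp hi).2⟩
  have hcpos : ∀ u j, 0 < colsum B u j := fun u j => colsum_pos B hB hcolne u j
  obtain ⟨L, hL⟩ := gfun_lb q k hk B hB hrow hcol
  set c : ℝ := (q : ℝ) / k with hcdef
  have hq0 : (0:ℝ) < (q:ℝ) := by
    have : (0:ℕ) < q := lt_of_lt_of_le (by norm_num) hq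
    exact_mod_cast this
  have hk0 : (0:ℝ) < (k:ℝ) := by exact_mod_cast hk
  have hc0 : 0 < c := div_pos hq0 hk0
  have hcval : (q:ℝ)*c = (q:ℝ)^2/k := by rw [hcdef]; ring
  clear_value c
  set C : ℝ := gfun c B 0 - L with hCdef
  have hC0 : 0 ≤ C := sub_nonneg.mpr (hL 0 (fun i => le_refl 0))
  have hCeq : ∀ w : Fin m → ℝ, (∀ i, w i ≤ 0) → gfun c B 0 - gfun c B w ≤ C := by
    intro w hw
    rw [hCdef]
    linarith [hL w hw]
  clear_value C
  set δ : ℝ := min (c/7) (c^2/(49*(C+1))) with hδdef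
  have hδ0 : 0 < δ := by
    apply lt_min
    · linarith
    · apply div_pos (pow_pos hc0 2)
      nlinarith
  have hδ1 : δ ≤ c/7 := min_le_left _ _
  have hδ2 : δ ≤ c^2/(49*(C+1)) := min_le_right _ _
  clear_value δ
  set G : (Fin m → ℝ) → ℝ := fun u => gfun c B u + δ * ∑ i, (u i)^2 with hGdef
  have hG0eq : G 0 = gfun c B 0 := by simp [hGdef]
  -- continuity
  have hcont : Continuous G := by
    apply Continuous.add
    · apply Continuous.sub
      · apply continuous_finset_sum
        intro j _
        apply Continuous.log
        · exact continuous_finset_sum _ fun i _ =>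
            (continuous_const.mul (Real.continuous_exp.comp (continuous_apply i)))
        · exact fun u => (hcpos u j).ne'
      · exact continuous_const.mul (continuous_finset_sum _ fun i _ => continuous_apply i)
    · exact continuous_const.mul (continuous_finset_sum _ fun i _ => (continuous_apply i).pow 2)
  set ρ : ℝ := Real.sqrt (C/δ + 1) with hρdef
  have hCδ : 0 ≤ C/δ := div_nonneg hC0 hδ0.le
  have hρ0 : 0 < ρ := Real.sqrt_pos.mpr (by linarith)
  have hρsq : ρ^2 = C/δ + 1 := Real.sq_sqrt (by linarith)
  set S : Set (Fin m → ℝ) := Set.univ.pi (fun _ => Set.Icc (-ρ) 0) with hSdef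
  have hScomp : IsCompact S := isCompact_univ_pi fun i => isCompact_Icc
  have hS0 : (0 : Fin m → ℝ) ∈ S := by
    intro i _
    exact ⟨by simp; linarith, le_refl 0⟩
  obtain ⟨u, huS, humin⟩ := hScomp.exists_isMinOn ⟨0, hS0⟩ hcont.continuousOn
  have hu0 : ∀ i, u i ≤ 0 := fun i => (huS i (Set.mem_univ i)).2
  have huG0 : G u ≤ G 0 := isMinOn_iff.mp humin 0 hS0
  -- a priori bound for candidate minima
  have hsqbound : ∀ v : Fin m → ℝ, (∀ i, v i ≤ 0) → G v ≤ G 0 → ∀ i, (v i)^2 ≤ C/δ := by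
    intro v hv hvle i
    have h1 : L ≤ gfun c B v := hL v hv
    have h2 : δ * ∑ i', (v i')^2 ≤ C := by
      have hgv : G v = gfun c B v + δ * ∑ i', (v i')^2 := by rw [hGdef]
      rw [hG0eq] at hvle
      have := hCeq v hv
      linarith
    have h3 : (v i)^2 ≤ ∑ i', (v i')^2 :=
      Finset.single_le_sum (f := fun i' => (v i')^2) (fun i' _ => sq_nonneg _) (mem_univ i)
    have h4 : δ * (v i)^2 ≤ C := le_trans (by nlinarith) h2
    rw [le_div_iff₀ hδ0]
    linarith [h4]
  -- global minimality
  have hglobal : ∀ v : Fin m → ℝ, (∀ i, v i ≤ 0) → G u ≤ G v := by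
    intro v hv
    by_contra hcon
    push_neg at hcon
    have hvle : G v ≤ G 0 := le_trans hcon.le huG0
    have hvS : v ∈ S := by
      intro i _
      refine ⟨?_, hv i⟩
      have h2 : (v i)^2 ≤ C/δ := hsqbound v hv hvle i
      by_contra hc
      push_neg at hc
      have h3 : ρ < -(v i) := by linarith
      have h4 : ρ^2 < (v i)^2 := by nlinarith
      linarith [hρsq ▸ h4]
    exact absurd (isMinOn_iff.mp humin v hvS) (not_le.mpr hcon)
  -- coordinate bound at the minimizer
  have husq : ∀ i, (u i)^2 ≤ C/δ := hsqbound u hu0 huG0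
  have hδu : ∀ i, δ * (-(u i)) ≤ c/7 := by
    intro i
    have h1 : (δ * (-(u i)))^2 ≤ C*δ := by
      have := husq i
      have h2 : δ * (u i)^2 ≤ C := by rwa [← le_div_iff₀' hδ0]
      nlinarith [hδ0.le]
    have h2 : Real.sqrt ((δ * (-(u i)))^2) ≤ Real.sqrt (C*δ) := Real.sqrt_le_sqrt h1
    have h3 : δ * (-(u i)) ≥ 0 := mul_nonneg hδ0.le (by linarith [hu0 i])
    rw [Real.sqrt_sq h3] at h2
    have h4 : C*δ ≤ (c/7)^2 := by
      have h5 : C * δ ≤ C * (c^2/(49*(C+1))) := mul_le_mul_of_nonneg_left hδ2 hC0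
      have hC1 : C + 1 ≠ 0 := by linarith
      have h6 : C * (c^2/(49*(C+1))) = (C/(C+1)) * (c^2/49) := by
        field_simp
      have h7 : C/(C+1) ≤ 1 := by
        rw [div_le_one (by linarith)]
        linarith
      have h8 : (C/(C+1)) * (c^2/49) ≤ c^2/49 :=
        mul_le_of_le_one_left (by positivity) h7
      calc C*δ ≤ (C/(C+1)) * (c^2/49) := by rw [← h6]; exact h5
        _ ≤ c^2/49 := h8
        _ = (c/7)^2 := by ring
    have h9 : Real.sqrt (C*δ) ≤ c/7 := by
      calc Real.sqrt (C*δ) ≤ Real.sqrt ((c/7)^2) := Real.sqrt_le_sqrt h4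
        _ = c/7 := Real.sqrt_sq (by linarith)
    linarith
  -- perturbation argument
  refine ⟨u, hu0, ?_⟩
  intro i
  set σ : ℝ := 1/3 with hσdef
  have hσ0 : 0 < σ := by rw [hσdef]; norm_num
  set R : ℝ := ∑ j, B i j * Real.exp (u i) / colsum B u j with hRdef
  have hR0 : 0 ≤ R := Finset.sum_nonneg fun j _ =>
    div_nonneg (mul_nonneg (hB i j) (Real.exp_pos _).le) (hcpos u j).le
  set v : Fin m → ℝ := Function.update u i (u i - σ) with hvdef
  have hv0 : ∀ i', v i' ≤ 0 := by
    intro i'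
    by_cases h : i' = i
    · subst h; rw [hvdef, Function.update_self]; linarith [hu0 i']
    · rw [hvdef, Function.update_of_ne h]; exact hu0 i'
  have hGuv : G u ≤ G v := hglobal v hv0
  have hvsum : ∑ i', v i' = (∑ i', u i') - σ := by
    rw [hvdef, Finset.sum_update_of_mem (mem_univ i), Finset.sdiff_singleton_eq_erase,
      ← Finset.add_sum_erase univ u (mem_univ i)]
    ring
  have hvsq : ∑ i', (v i')^2 = (∑ i', (u i')^2) + ((u i - σ)^2 - (u i)^2) := by
    rw [← Finset.add_sum_erase univ (fun i' => (v i')^2) (mem_univ i),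
      ← Finset.add_sum_erase univ (fun i' => (u i')^2) (mem_univ i)]
    have h1 : ∑ i' ∈ univ.erase i, (v i')^2 = ∑ i' ∈ univ.erase i, (u i')^2 :=
      Finset.sum_congr rfl fun i' hi' => by
        rw [hvdef, Function.update_of_ne (Finset.ne_of_mem_erase hi')]
    rw [h1, hvdef, Function.update_self]
    ring
  have hcolv : ∀ j, colsum B v j = colsum B u j + (Real.exp (-σ) - 1) * (B i j * Real.exp (u i)) := by
    intro j
    unfold colsum
    rw [← Finset.add_sum_erase univ (fun i' => B i' j * Real.exp (v i')) (mem_univ i),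
      ← Finset.add_sum_erase univ (fun i' => B i' j * Real.exp (u i')) (mem_univ i)]
    have h1 : ∑ i' ∈ univ.erase i, B i' j * Real.exp (v i')
        = ∑ i' ∈ univ.erase i, B i' j * Real.exp (u i') :=
      Finset.sum_congr rfl fun i' hi' => by
        rw [hvdef, Function.update_of_ne (Finset.ne_of_mem_erase hi')]
    rw [h1, hvdef, Function.update_self, show u i - σ = u i + (-σ) by ring, Real.exp_add]
    ring
  have hlogle : ∀ j, Real.log (colsum B v j) - Real.log (colsum B u j)
      ≤ (Real.exp (-σ) - 1) * (B i j * Real.exp (u i) / colsum B u j) := by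
    intro j
    have hx : 0 < colsum B u j := hcpos u j
    have hx' : 0 < colsum B v j := hcpos v j
    rw [← Real.log_div hx'.ne' hx.ne']
    have h1 := Real.log_le_sub_one_of_pos (div_pos hx' hx)
    have heq : colsum B v j / colsum B u j - 1
        = (Real.exp (-σ) - 1) * (B i j * Real.exp (u i) / colsum B u j) := by
      rw [hcolv j]
      field_simp
      ring
    linarith [heq ▸ h1]
  have hsumlog : ∑ j, (Real.log (colsum B v j) - Real.log (colsum B u j))
      ≤ (Real.exp (-σ) - 1) * R := by
    rw [hRdef, Finset.mul_sum]
    exact Finset.sum_le_sum fun j _ => hlogle j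
  have hmain : 0 ≤ ((Real.exp (-σ) - 1) * R) + c * σ + δ * ((u i - σ)^2 - (u i)^2) := by
    have hexp : gfun c B v - gfun c B u
        = (∑ j, (Real.log (colsum B v j) - Real.log (colsum B u j))) + c * σ := by
      unfold gfun
      rw [hvsum, Finset.sum_sub_distrib]
      ring
    have hGdiff : G v - G u = (gfun c B v - gfun c B u) + δ * ((u i - σ)^2 - (u i)^2) := by
      simp only [hGdef]
      rw [hvsq]
      ring
    linarith [hGuv, hexp ▸ hGdiff, hsumlog]
  have hexpand : (u i - σ)^2 - (u i)^2 = σ^2 - 2*σ*(u i) := by ring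
  rw [hexpand] at hmain
  have hkey : (1 - Real.exp (-σ)) * R ≤ σ * (c + δ*σ + 2*δ*(-(u i))) := by nlinarith [hmain]
  have hsig : σ * Real.exp (-σ) ≤ 1 - Real.exp (-σ) := by
    have h1 : σ + 1 ≤ Real.exp σ := Real.add_one_le_exp σ
    have h2 : Real.exp (-σ) * Real.exp σ = 1 := by rw [← Real.exp_add]; simp
    nlinarith [Real.exp_pos (-σ)]
  have h3 : σ * Real.exp (-σ) * R ≤ σ * (c + δ*σ + 2*δ*(-(u i))) :=
    le_trans (mul_le_mul_of_nonneg_right hsig hR0) hkey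
  have h4 : Real.exp (-σ) * R ≤ c + δ*σ + 2*δ*(-(u i)) := by
    rw [hσdef] at h3 ⊢
    linarith
  have hfinal : R ≤ (c + δ*σ + 2*δ*(-(u i))) * Real.exp σ := by
    have h5 : Real.exp (-σ) * R * Real.exp σ ≤ (c + δ*σ + 2*δ*(-(u i))) * Real.exp σ :=
      mul_le_mul_of_nonneg_right h4 (Real.exp_pos σ).le
    calc R = Real.exp (-σ) * R * Real.exp σ := by
          rw [mul_comm (Real.exp (-σ)) R, mul_assoc, ← Real.exp_add]
          simp
      _ ≤ _ := h5
  have hexp13 : Real.exp σ ≤ 1.4 := by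
    rw [hσdef]
    have h1 : Real.exp ((1:ℝ)/3)^(3:ℕ) = Real.exp 1 := by
      rw [← Real.exp_nat_mul]
      norm_num
    have h2 : Real.exp 1 ≤ 2.744 := le_of_lt (lt_of_lt_of_le Real.exp_one_lt_d9 (by norm_num))
    have h3 : Real.exp ((1:ℝ)/3)^(3:ℕ) ≤ (1.4:ℝ)^(3:ℕ) := by
      rw [h1]
      norm_num
      linarith
    exact le_of_pow_le_pow_left₀ (by norm_num) (by norm_num) h3
  have hcq : c + δ*σ + 2*δ*(-(u i)) ≤ 4*c/3 := by
    have h6 : δ*σ ≤ c/21 := by rw [hσdef]; linarith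
    linarith [hδu i]
  have h7 : R ≤ (4*c/3) * 1.4 :=
    le_trans hfinal (mul_le_mul hcq hexp13 (Real.exp_pos σ).le (by positivity))
  have h8 : 2*c ≤ (q:ℝ)*c := by
    have : (2:ℝ) ≤ (q:ℝ) := by exact_mod_cast hq
    nlinarith [hc0]
  linarith [hcval]

lemma herm_ineq {n : ℕ} (M : Matrix (Fin n) (Fin n) ℂ) (hM : M.IsHermitian) :
    (∑ j, (M j j).re)^2 ≤ (M.rank : ℝ) * ∑ j, ∑ j', Complex.normSq (M j j') := by
  classical
  set U : Matrix (Fin n) (Fin n) ℂ := (Matrix.IsHermitian.eigenvectorUnitary hM : Matrix (Fin n) (Fin n) ℂ) with hUdef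
  set lam := hM.eigenvalues
  set D : Matrix (Fin n) (Fin n) ℂ := Matrix.diagonal (RCLike.ofReal ∘ lam) with hDdef
  have hU : star U * U = 1 := by
    have := (Matrix.IsHermitian.eigenvectorUnitary hM).2
    rw [Matrix.mem_unitaryGroup_iff'] at this
    exact this
  have hspec : M = U * D * star U := hM.spectral_theorem
  have htr : M.trace = ∑ i, (lam i : ℂ) := by
    rw [hspec, Matrix.trace_mul_cycle, hU, Matrix.one_mul, hDdef,
      Matrix.trace_diagonal]
    rfl
  have hMM : M * M = U * (D * D) * star U := by
    calc M * M = U * D * ((star U * U) * (D * star U)) := by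
          rw [hspec]; simp only [Matrix.mul_assoc]
    _ = U * (D * D) * star U := by rw [hU, Matrix.one_mul]; simp only [Matrix.mul_assoc]
  have htr2 : (M * M).trace = ∑ i, ((lam i : ℂ))^2 := by
    rw [hMM, Matrix.trace_mul_cycle, hU, Matrix.one_mul, hDdef,
      Matrix.diagonal_mul_diagonal, Matrix.trace_diagonal]
    simp [sq]
  -- real identities
  have h1 : ∑ j, (M j j).re = ∑ i, lam i := by
    have := congrArg Complex.re htr
    simpa [Matrix.trace, Matrix.diag, Complex.re_sum] using this
  have h2 : ∑ j, ∑ j', Complex.normSq (M j j') = ∑ i, (lam i)^2 := by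
    have hsym : ∀ j j' : Fin n, M j' j = (starRingEnd ℂ) (M j j') := by
      intro j j'
      conv_lhs => rw [← hM.eq]
      simp [Matrix.conjTranspose_apply]
    have : (M * M).trace = ((∑ j, ∑ j', Complex.normSq (M j j') : ℝ) : ℂ) := by
      rw [Matrix.trace]
      push_cast
      apply Finset.sum_congr rfl
      intro j _
      rw [Matrix.diag, Matrix.mul_apply]
      apply Finset.sum_congr rfl
      intro j' _
      rw [hsym j j', Complex.mul_conj]
    rw [this] at htr2
    have : ((∑ j, ∑ j', Complex.normSq (M j j') : ℝ) : ℂ) = ((∑ i, (lam i)^2 : ℝ) : ℂ) := by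
      rw [htr2]; push_cast; ring
    exact_mod_cast this
  have h3 : M.rank = (univ.filter fun i => lam i ≠ 0).card := by
    rw [hM.rank_eq_card_non_zero_eigs, Fintype.card_subtype]
  rw [h1, h2, h3]
  have h4 : ∑ i, lam i = ∑ i ∈ univ.filter (fun i => lam i ≠ 0), lam i :=
    (Finset.sum_filter_ne_zero _).symm
  rw [h4]
  calc (∑ i ∈ univ.filter (fun i => lam i ≠ 0), lam i)^2
      ≤ (univ.filter (fun i => lam i ≠ 0)).card * ∑ i ∈ univ.filter (fun i => lam i ≠ 0), (lam i)^2 :=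
        sq_sum_le_card_mul_sum_sq
    _ ≤ (univ.filter (fun i => lam i ≠ 0)).card * ∑ i, (lam i)^2 := by
        apply mul_le_mul_of_nonneg_left _ (Nat.cast_nonneg _)
        apply Finset.sum_le_sum_of_subset_of_nonneg (Finset.filter_subset _ _)
        intro i _ _; positivity

lemma rank_lb {m n : ℕ} (hn : 0 < n) (A : Matrix (Fin m) (Fin n) ℂ)
    (hdiag : ∀ j, ∑ i, Complex.normSq (A i j) = 1) (ε : ℝ) (hε : 0 ≤ ε)
    (hoff : ∑ j, ∑ j' ∈ univ.erase j,
        Complex.normSq (∑ i, (starRingEnd ℂ) (A i j) * A i j') ≤ ε) :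
    (n : ℝ) - ε ≤ A.rank := by
  classical
  set M : Matrix (Fin n) (Fin n) ℂ := Aᴴ * A with hMdef
  have hM : M.IsHermitian := Matrix.isHermitian_conjTranspose_mul_self A
  have hentry : ∀ j j', M j j' = ∑ i, (starRingEnd ℂ) (A i j) * A i j' := by
    intro j j'
    simp [hMdef, Matrix.mul_apply, Matrix.conjTranspose_apply]
  have hMdiag : ∀ j, M j j = 1 := by
    intro j
    rw [hentry]
    have : ∀ i, (starRingEnd ℂ) (A i j) * A i j = ((Complex.normSq (A i j) : ℝ) : ℂ) := by
      intro i
      rw [mul_comm, Complex.mul_conj]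
    rw [Finset.sum_congr rfl fun i _ => this i, ← Complex.ofReal_sum, hdiag]
    norm_num
  have key := herm_ineq M hM
  have hrank : M.rank = A.rank := Matrix.rank_conjTranspose_mul_self A
  have hd : ∑ j, (M j j).re = (n : ℝ) := by
    simp [hMdiag]
  have hfr : ∑ j, ∑ j', Complex.normSq (M j j') ≤ (n : ℝ) + ε := by
    have : ∀ j : Fin n, ∑ j', Complex.normSq (M j j')
        = 1 + ∑ j' ∈ univ.erase j, Complex.normSq (M j j') := by
      intro j
      rw [← Finset.add_sum_erase _ _ (mem_univ j), hMdiag]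
      norm_num
    rw [Finset.sum_congr rfl fun j _ => this j, Finset.sum_add_distrib]
    have : ∑ j, ∑ j' ∈ univ.erase j, Complex.normSq (M j j') ≤ ε := by
      calc ∑ j, ∑ j' ∈ univ.erase j, Complex.normSq (M j j')
          = ∑ j, ∑ j' ∈ univ.erase j, Complex.normSq (∑ i, (starRingEnd ℂ) (A i j) * A i j') := by
            apply Finset.sum_congr rfl; intro j _; apply Finset.sum_congr rfl; intro j' _
            rw [hentry]
      _ ≤ ε := hoff
    simp only [Finset.sum_const, Finset.card_univ, Fintype.card_fin, nsmul_eq_mul, mul_one]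
    linarith
  rw [hd, hrank] at key
  have hrk : (0:ℝ) ≤ (A.rank : ℝ) := by positivity
  have key2 : (n:ℝ)^2 ≤ (A.rank : ℝ) * ((n:ℝ) + ε) := by
    calc (n:ℝ)^2 ≤ (A.rank : ℝ) * ∑ j, ∑ j', Complex.normSq (M j j') := key
    _ ≤ (A.rank : ℝ) * ((n:ℝ) + ε) := mul_le_mul_of_nonneg_left hfr hrk
  have hn1 : (1:ℝ) ≤ (n:ℝ) := by exact_mod_cast hn
  nlinarith [hε, key2, hrk, hn1]

lemma pair_bound {m : ℕ} (x y : Fin m → ℂ) (t : ℕ)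
    (h : (univ.filter fun i => x i ≠ 0 ∧ y i ≠ 0).card ≤ t) :
    Complex.normSq (∑ i, (starRingEnd ℂ) (x i) * y i)
      ≤ (t : ℝ) * ∑ i, Complex.normSq (x i) * Complex.normSq (y i) := by
  classical
  set T : Finset (Fin m) := univ.filter fun i => x i ≠ 0 ∧ y i ≠ 0 with hT
  have hsum : ∑ i, (starRingEnd ℂ) (x i) * y i = ∑ i ∈ T, (starRingEnd ℂ) (x i) * y i := by
    symm
    apply Finset.sum_filter_of_ne
    intro i _ hne
    constructor
    · intro hx; apply hne; rw [hx]; simp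
    · intro hy; apply hne; rw [hy]; simp
  rw [hsum]
  have h1 : ‖∑ i ∈ T, (starRingEnd ℂ) (x i) * y i‖
      ≤ ∑ i ∈ T, ‖(starRingEnd ℂ) (x i) * y i‖ :=
    norm_sum_le _ _
  have h2 : Complex.normSq (∑ i ∈ T, (starRingEnd ℂ) (x i) * y i)
      ≤ (∑ i ∈ T, ‖(starRingEnd ℂ) (x i) * y i‖)^2 := by
    rw [← Complex.sq_norm]
    exact pow_le_pow_left₀ (norm_nonneg _) h1 2
  have h3 : (∑ i ∈ T, ‖(starRingEnd ℂ) (x i) * y i‖)^2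
      ≤ (T.card : ℝ) * ∑ i ∈ T, ‖(starRingEnd ℂ) (x i) * y i‖^2 :=
    sq_sum_le_card_mul_sum_sq
  have h4 : ∀ i, ‖(starRingEnd ℂ) (x i) * y i‖^2
      = Complex.normSq (x i) * Complex.normSq (y i) := by
    intro i
    rw [Complex.sq_norm, Complex.normSq_mul, Complex.normSq_conj]
  have h5 : ∑ i ∈ T, ‖(starRingEnd ℂ) (x i) * y i‖^2
      ≤ ∑ i, Complex.normSq (x i) * Complex.normSq (y i) := by
    rw [Finset.sum_congr rfl fun i _ => h4 i]
    apply Finset.sum_le_sum_of_subset_of_nonneg (Finset.subset_univ T)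
    intro i _ _
    exact mul_nonneg (Complex.normSq_nonneg _) (Complex.normSq_nonneg _)
  have h6 : (T.card : ℝ) ≤ (t : ℝ) := by exact_mod_cast h
  calc Complex.normSq (∑ i ∈ T, (starRingEnd ℂ) (x i) * y i)
      ≤ (T.card : ℝ) * ∑ i ∈ T, ‖(starRingEnd ℂ) (x i) * y i‖^2 := le_trans h2 h3
    _ ≤ (t : ℝ) * ∑ i, Complex.normSq (x i) * Complex.normSq (y i) := by
        apply mul_le_mul h6 h5 _ (by positivity)
        apply Finset.sum_nonneg
        intro i _
        positivity

set_option maxHeartbeats 1000000 in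
theorem stmt_1 (m n q k t : ℕ) (hk : 0 < k) (A : Matrix (Fin m) (Fin n) ℂ)
    (hrow : ∀ i : Fin m, (Finset.univ.filter (fun j => A i j ≠ 0)).card ≤ q)
    (hcol : ∀ j : Fin n, k ≤ (Finset.univ.filter (fun i => A i j ≠ 0)).card)
    (hpair : ∀ j₁ j₂ : Fin n, j₁ ≠ j₂ →
      (Finset.univ.filter (fun i => A i j₁ ≠ 0 ∧ A i j₂ ≠ 0)).card ≤ t) :
    (n : ℝ) - n * t * q * (q - 1) / k ≤ A.rank := by
  classical
  rcases Nat.eq_zero_or_pos n with hn0 | hn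
  · subst hn0
    simp only [Nat.cast_zero, zero_mul, zero_div, sub_zero]
    positivity
  -- q ≥ 1
  have hq1 : 1 ≤ q := by
    by_contra hq0
    push_neg at hq0
    have hq0' : q = 0 := by omega
    subst hq0'
    have hempty : ∀ i j, A i j = 0 := by
      intro i j
      by_contra hne
      have h1 : 0 < (univ.filter fun j' => A i j' ≠ 0).card :=
        Finset.card_pos.mpr ⟨j, Finset.mem_filter.mpr ⟨mem_univ _, hne⟩⟩
      have := hrow i
      omega
    have := hcol ⟨0, hn⟩
    have hzero : (univ.filter fun i => A i ⟨0, hn⟩ ≠ 0) = ∅ := by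
      apply Finset.filter_false_of_mem
      intro i _
      simp [hempty]
    rw [hzero] at this
    simp only [Finset.card_empty] at this
    omega
  -- pass to the nonnegative real matrix of squared norms
  set B : Matrix (Fin m) (Fin n) ℝ := fun i j => Complex.normSq (A i j) with hBdef
  have hB : ∀ i j, 0 ≤ B i j := fun i j => Complex.normSq_nonneg _
  have hBsupp : ∀ i j, B i j ≠ 0 ↔ A i j ≠ 0 := by
    intro i j
    rw [hBdef]
    simp [Complex.normSq_eq_zero]
  have hrowB : ∀ i, (univ.filter fun j => B i j ≠ 0).card ≤ q := by
    intro i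
    have heq : (univ.filter fun j => B i j ≠ 0) = (univ.filter fun j => A i j ≠ 0) :=
      Finset.filter_congr fun j _ => by rw [hBsupp]
    rw [heq]; exact hrow i
  have hcolB : ∀ j, k ≤ (univ.filter fun i => B i j ≠ 0).card := by
    intro j
    have heq : (univ.filter fun i => B i j ≠ 0) = (univ.filter fun i => A i j ≠ 0) :=
      Finset.filter_congr fun i _ => by rw [hBsupp]
    rw [heq]; exact hcol j
  have hcolne : ∀ j, ∃ i, B i j ≠ 0 := by
    intro j
    have h := lt_of_lt_of_le hk (hcolB j)
    rw [Finset.card_pos] at h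
    obtain ⟨i, hi⟩ := h
    exact ⟨i, (Finset.mem_filter.mp hi).2⟩
  have hcs : ∀ u j, 0 < colsum B u j := fun u j => colsum_pos B hB hcolne u j
  obtain ⟨u, hu0, hu⟩ : ∃ u : Fin m → ℝ, (∀ i, u i ≤ 0) ∧ (2 ≤ q →
      ∀ i, (∑ j, B i j * Real.exp (u i) / colsum B u j) ≤ (q:ℝ)^2/k) := by
    rcases le_or_gt 2 q with hq2 | hqlt
    · obtain ⟨u, hu0, hu⟩ := exists_scaling q k hq2 hk B hB hrowB hcolB
      exact ⟨u, hu0, fun _ => hu⟩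
    · exact ⟨0, fun _ => le_refl 0, fun h => absurd h (by omega)⟩
  -- the scaled matrix
  set d1 : Fin m → ℝ := fun i => Real.exp (u i / 2) with hd1
  set d2 : Fin n → ℝ := fun j => (Real.sqrt (colsum B u j))⁻¹ with hd2
  have hd1pos : ∀ i, 0 < d1 i := fun i => Real.exp_pos _
  have hd2pos : ∀ j, 0 < d2 j := fun j => inv_pos.mpr (Real.sqrt_pos.mpr (hcs u j))
  set A' : Matrix (Fin m) (Fin n) ℂ :=
    Matrix.diagonal (fun i => (d1 i : ℂ)) * A * Matrix.diagonal (fun j => (d2 j : ℂ)) with hA'def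
  have hA'entry : ∀ i j, A' i j = (d1 i : ℂ) * A i j * (d2 j : ℂ) := by
    intro i j
    rw [hA'def, Matrix.mul_diagonal, Matrix.diagonal_mul]
  have hrank : A'.rank = A.rank := by
    rw [hA'def]
    rw [Matrix.rank_mul_eq_left_of_isUnit_det, Matrix.rank_mul_eq_right_of_isUnit_det]
    · rw [Matrix.det_diagonal]
      apply isUnit_iff_ne_zero.mpr
      apply Finset.prod_ne_zero_iff.mpr
      intro i _
      exact Complex.ofReal_ne_zero.mpr (hd1pos i).ne'
    · rw [Matrix.det_diagonal]
      apply isUnit_iff_ne_zero.mpr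
      apply Finset.prod_ne_zero_iff.mpr
      intro j _
      exact Complex.ofReal_ne_zero.mpr (hd2pos j).ne'
  have hs : ∀ i j, Complex.normSq (A' i j) = B i j * Real.exp (u i) / colsum B u j := by
    intro i j
    rw [hA'entry, Complex.normSq_mul, Complex.normSq_mul, Complex.normSq_ofReal, Complex.normSq_ofReal]
    rw [hd1, hd2]
    have h1 : Real.exp (u i / 2) * Real.exp (u i / 2) = Real.exp (u i) := by
      rw [← Real.exp_add]; ring_nf
    have h2 : (Real.sqrt (colsum B u j))⁻¹ * (Real.sqrt (colsum B u j))⁻¹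
        = (colsum B u j)⁻¹ := by
      rw [← mul_inv, Real.mul_self_sqrt (hcs u j).le]
    dsimp only
    rw [h1, h2, hBdef]
    rw [div_eq_mul_inv]
    ring
  have hA'supp : ∀ i j, A' i j ≠ 0 ↔ A i j ≠ 0 := by
    intro i j
    rw [hA'entry]
    simp [mul_eq_zero, Complex.ofReal_eq_zero, (hd1pos i).ne', (hd2pos j).ne']
  have hdiag : ∀ j, ∑ i, Complex.normSq (A' i j) = 1 := by
    intro j
    rw [Finset.sum_congr rfl fun i _ => hs i j, ← Finset.sum_div]
    exact div_self (hcs u j).ne'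
  have hq1R : (1:ℝ) ≤ (q:ℝ) := by exact_mod_cast hq1
  have hkR : (0:ℝ) < (k:ℝ) := by exact_mod_cast hk
  have hε : (0:ℝ) ≤ (n:ℝ) * t * q * ((q:ℝ) - 1) / k := by
    apply div_nonneg _ hkR.le
    apply mul_nonneg (by positivity) (by linarith)
  have hoff : ∑ j, ∑ j' ∈ univ.erase j,
      Complex.normSq (∑ i, (starRingEnd ℂ) (A' i j) * A' i j')
        ≤ (n:ℝ) * t * q * ((q:ℝ) - 1) / k := by
    rcases le_or_gt 2 q with hq2 | hqlt
    · -- main case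
      have hqR : (0:ℝ) < (q:ℝ) := by linarith
      have hRle : ∀ i, ∑ j, Complex.normSq (A' i j) ≤ (q:ℝ)^2/k := by
        intro i
        rw [Finset.sum_congr rfl fun j _ => hs i j]
        exact hu hq2 i
      have hstep1 : ∀ j, ∀ j' ∈ univ.erase j,
          Complex.normSq (∑ i, (starRingEnd ℂ) (A' i j) * A' i j')
            ≤ (t:ℝ) * ∑ i, Complex.normSq (A' i j) * Complex.normSq (A' i j') := by
        intro j j' hj'
        apply pair_bound
        have heq : (univ.filter fun i => A' i j ≠ 0 ∧ A' i j' ≠ 0)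
            = (univ.filter fun i => A i j ≠ 0 ∧ A i j' ≠ 0) :=
          Finset.filter_congr fun i _ => by rw [hA'supp, hA'supp]
        rw [heq]
        exact hpair j j' (Finset.ne_of_mem_erase hj').symm
      have hCSrow : ∀ i, (∑ j, Complex.normSq (A' i j))^2
          ≤ (q:ℝ) * ∑ j, (Complex.normSq (A' i j))^2 := by
        intro i
        have hfeq : (univ.filter fun j => Complex.normSq (A' i j) ≠ 0)
            = (univ.filter fun j => A i j ≠ 0) :=
          Finset.filter_congr fun j _ => by
            rw [ne_eq, Complex.normSq_eq_zero, ← ne_eq, hA'supp]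
        have h1 : ∑ j, Complex.normSq (A' i j)
            = ∑ j ∈ univ.filter (fun j => Complex.normSq (A' i j) ≠ 0), Complex.normSq (A' i j) :=
          (Finset.sum_filter_ne_zero _).symm
        rw [h1]
        calc (∑ j ∈ univ.filter (fun j => Complex.normSq (A' i j) ≠ 0), Complex.normSq (A' i j))^2
            ≤ ((univ.filter (fun j => Complex.normSq (A' i j) ≠ 0)).card : ℝ)
              * ∑ j ∈ univ.filter (fun j => Complex.normSq (A' i j) ≠ 0), (Complex.normSq (A' i j))^2 :=
              sq_sum_le_card_mul_sum_sq
          _ ≤ (q:ℝ) * ∑ j, (Complex.normSq (A' i j))^2 := by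
              apply mul_le_mul
              · rw [hfeq]; exact_mod_cast hrow i
              · apply Finset.sum_le_sum_of_subset_of_nonneg (Finset.filter_subset _ _)
                intro j _ _; positivity
              · apply Finset.sum_nonneg; intro j _; positivity
              · positivity
      calc ∑ j, ∑ j' ∈ univ.erase j, Complex.normSq (∑ i, (starRingEnd ℂ) (A' i j) * A' i j')
          ≤ ∑ j, ∑ j' ∈ univ.erase j,
              (t:ℝ) * ∑ i, Complex.normSq (A' i j) * Complex.normSq (A' i j') := by
            apply Finset.sum_le_sum
            intro j _
            exact Finset.sum_le_sum (hstep1 j)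
        _ = (t:ℝ) * ∑ i, ((∑ j, Complex.normSq (A' i j))^2 - ∑ j, (Complex.normSq (A' i j))^2) := by
            have hswap1 : ∀ j, ∑ j' ∈ univ.erase j,
                (t:ℝ) * ∑ i, Complex.normSq (A' i j) * Complex.normSq (A' i j')
                = (t:ℝ) * ∑ i, Complex.normSq (A' i j)
                    * ((∑ j', Complex.normSq (A' i j')) - Complex.normSq (A' i j)) := by
              intro j
              rw [← Finset.mul_sum]
              congr 1
              rw [Finset.sum_comm]
              apply Finset.sum_congr rfl
              intro i _
              rw [← Finset.mul_sum, Finset.sum_erase_eq_sub (mem_univ j)]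
            rw [Finset.sum_congr rfl fun j _ => hswap1 j, ← Finset.mul_sum, Finset.sum_comm]
            congr 1
            apply Finset.sum_congr rfl
            intro i _
            have : ∀ j, Complex.normSq (A' i j)
                * ((∑ j', Complex.normSq (A' i j')) - Complex.normSq (A' i j))
                = Complex.normSq (A' i j) * (∑ j', Complex.normSq (A' i j'))
                  - (Complex.normSq (A' i j))^2 := by
              intro j; ring
            rw [Finset.sum_congr rfl fun j _ => this j, Finset.sum_sub_distrib, ← Finset.sum_mul]
            ring
        _ ≤ (t:ℝ) * ∑ i, (((q:ℝ)-1)/q * ((q:ℝ)^2/k)) * (∑ j, Complex.normSq (A' i j)) := by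
            apply mul_le_mul_of_nonneg_left _ (by positivity)
            apply Finset.sum_le_sum
            intro i _
            set R := ∑ j, Complex.normSq (A' i j) with hRdef
            have hR0 : 0 ≤ R := Finset.sum_nonneg fun j _ => Complex.normSq_nonneg _
            have h1 : R^2 ≤ (q:ℝ) * ∑ j, (Complex.normSq (A' i j))^2 := hCSrow i
            have h2 : R ≤ (q:ℝ)^2/k := hRle i
            have h3 : R^2 - ∑ j, (Complex.normSq (A' i j))^2 ≤ ((q:ℝ)-1)/q * R^2 := by
              have h4 : R^2/q ≤ ∑ j, (Complex.normSq (A' i j))^2 := by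
                rw [div_le_iff₀ hqR]
                nlinarith [h1]
              have h5 : ((q:ℝ)-1)/q * R^2 = R^2 - R^2/q := by
                field_simp
              linarith
            have h7 : 0 ≤ ((q:ℝ)-1)/q := by
              apply div_nonneg _ hqR.le
              linarith
            have h8 : R*R ≤ ((q:ℝ)^2/k)*R := mul_le_mul_of_nonneg_right h2 hR0
            have h6 : ((q:ℝ)-1)/q * R^2 ≤ (((q:ℝ)-1)/q * ((q:ℝ)^2/k)) * R := by
              calc ((q:ℝ)-1)/q * R^2 = ((q:ℝ)-1)/q * (R*R) := by ring
                _ ≤ ((q:ℝ)-1)/q * (((q:ℝ)^2/k)*R) := mul_le_mul_of_nonneg_left h8 h7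
                _ = (((q:ℝ)-1)/q * ((q:ℝ)^2/k)) * R := by ring
            exact le_trans h3 h6
        _ = (t:ℝ) * ((((q:ℝ)-1)/q * ((q:ℝ)^2/k)) * (n:ℝ)) := by
            rw [← Finset.mul_sum]
            congr 2
            have hRsum : ∑ i, ∑ j, Complex.normSq (A' i j) = (n:ℝ) := by
              rw [Finset.sum_comm, Finset.sum_congr rfl fun j _ => hdiag j]
              simp
            rw [hRsum]
        _ = (n:ℝ) * t * q * ((q:ℝ) - 1) / k := by
            field_simp
    · -- q = 1 : off-diagonal entries vanish
      have hq1' : q = 1 := by omega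
      have hzero : ∀ j j', j' ≠ j → (∑ i, (starRingEnd ℂ) (A' i j) * A' i j') = 0 := by
        intro j j' hne
        apply Finset.sum_eq_zero
        intro i _
        have hor : A i j = 0 ∨ A i j' = 0 := by
          by_contra hc
          push_neg at hc
          have hsub : ({j, j'} : Finset (Fin n)) ⊆ univ.filter (fun j'' => A i j'' ≠ 0) := by
            intro x hx
            rcases Finset.mem_insert.mp hx with rfl | hx
            · exact Finset.mem_filter.mpr ⟨mem_univ _, hc.1⟩
            · rw [Finset.mem_singleton.mp hx]
              exact Finset.mem_filter.mpr ⟨mem_univ _, hc.2⟩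
          have hcard2 : ({j, j'} : Finset (Fin n)).card = 2 := by
            rw [Finset.card_insert_of_notMem (by simpa using (Ne.symm hne)), Finset.card_singleton]
          have hle := Finset.card_le_card hsub
          rw [hcard2] at hle
          have := hrow i
          omega
        rcases hor with h | h
        · have hz : A' i j = 0 := by rw [hA'entry, h]; ring
          rw [hz]; simp
        · have hz : A' i j' = 0 := by rw [hA'entry, h]; ring
          rw [hz]; simp
      have : ∑ j, ∑ j' ∈ univ.erase j,
          Complex.normSq (∑ i, (starRingEnd ℂ) (A' i j) * A' i j') = 0 := by
        apply Finset.sum_eq_zero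
        intro j _
        apply Finset.sum_eq_zero
        intro j' hj'
        rw [hzero j j' (Finset.ne_of_mem_erase hj'), map_zero]
      rw [this]
      exact hε
  have hfinal := rank_lb hn A' hdiag _ hε hoff
  rw [hrank] at hfinal
  exact hfinal
end

section
/- Let V₁, ..., Vₙ ⊂ ℝᵈ be a (δ,n)-MR configuration with |V₁| ≥ |V₂| ≥ ... ≥ |Vₙ|. Fix 0 < ε < δ and let c_ε = 1/(δ−ε). Suppose y ∈ [n] is ε-large and every index x+1, x+2, ..., y−1 is ε-small (where 0 ≤ x < y ≤ n). Then for every i with 0 ≤ i ≤ y − x − 1, ∑_{j ≥ y−i} |V_j| ≤ 2·(1+c_ε)^i · |V_y|. -/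
open scoped Classical

/-- `V 1, …, V n` (indexed by `Finset.Icc 1 n`) form a `(δ, n)`-MR configuration in `ℝ^d`:
the sets are pairwise disjoint, and for every `i` and every `v ∈ V i` there are at least
`δ * |V i|` points `u ∈ V i \ {v}` such that the line through `v` and `u` contains a third
point belonging to some `V j` with `j ≠ i`. -/
def MRConfig (d n : ℕ) (δ : ℝ) (V : ℕ → Finset (EuclideanSpace ℝ (Fin d))) : Prop :=
  (∀ i ∈ Finset.Icc 1 n, ∀ j ∈ Finset.Icc 1 n, i ≠ j → Disjoint (V i) (V j)) ∧
  ∀ i ∈ Finset.Icc 1 n, ∀ v ∈ V i,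
    δ * (V i).card ≤
      (((V i).erase v).filter (fun u => ∃ j ∈ Finset.Icc 1 n, j ≠ i ∧
        ∃ w ∈ V j, w ≠ v ∧ w ≠ u ∧ Collinear ℝ ({v, u, w} : Set _))).card

theorem stmt_3 (d n : ℕ) (δ ε : ℝ) (hε : 0 < ε) (hεδ : ε < δ)
    (V : ℕ → Finset (EuclideanSpace ℝ (Fin d)))
    (hMR : MRConfig d n δ V)
    (hmono : ∀ i ∈ Finset.Icc 1 n, ∀ j ∈ Finset.Icc 1 n, i ≤ j →
      (V j).card ≤ (V i).card)
    (x y : ℕ) (hxy : x < y) (hyn : y ≤ n)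
    -- `y` is an `ε`-large index
    (hlarge : (1 / (δ - ε)) * ∑ j ∈ Finset.Icc (y + 1) n, ((V j).card : ℝ) ≤ (V y).card)
    -- every index `x+1, …, y-1` is `ε`-small
    (hsmall : ∀ k ∈ Finset.Icc (x + 1) (y - 1),
      ((V k).card : ℝ) < (1 / (δ - ε)) * ∑ j ∈ Finset.Icc (k + 1) n, ((V j).card : ℝ))
    (i : ℕ) (hi : i ≤ y - x - 1) :
    ∑ j ∈ Finset.Icc (y - i) n, ((V j).card : ℝ) ≤
      2 * (1 + 1 / (δ - ε)) ^ i * (V y).card := by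

  have hde : (0:ℝ) < δ - ε := by linarith
  have hc : (0:ℝ) < 1 / (δ - ε) := by positivity
  -- if some V j with j ∈ [1,n] is nonempty, then δ < 1
  have hdelta1 : ∀ j ∈ Finset.Icc 1 n, (V j).Nonempty → δ < 1 := by
    intro j hj ⟨v, hv⟩
    have h := hMR.2 j hj v hv
    have hfl : ∀ (p : EuclideanSpace ℝ (Fin d) → Prop) (inst : DecidablePred p),
        (@Finset.filter _ p inst ((V j).erase v)).card ≤ (V j).card - 1 := by
      intro p inst
      letI := inst
      exact (Finset.card_filter_le _ _).trans_eq (Finset.card_erase_of_mem hv)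
    obtain ⟨c, hc1, hc2⟩ : ∃ c : ℕ, δ * (V j).card ≤ c ∧ c ≤ (V j).card - 1 :=
      ⟨_, h, hfl _ _⟩
    have h3 : 1 ≤ (V j).card := Finset.card_pos.mpr ⟨v, hv⟩
    have hm : (0:ℝ) < (V j).card := by exact_mod_cast Finset.card_pos.mpr ⟨v, hv⟩
    have hc2' : (c : ℝ) ≤ ((V j).card : ℝ) - 1 := by
      push_cast [Nat.cast_sub h3] at hc2 ⊢
      exact_mod_cast hc2
    nlinarith [hc1.trans hc2']
  induction i with
  | zero =>
    simp only [Nat.sub_zero, pow_zero, mul_one]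
    have hsplit : Finset.Icc y n = insert y (Finset.Icc (y+1) n) := by
      ext a; simp only [Finset.mem_Icc, Finset.mem_insert]; omega
    have hnm : y ∉ Finset.Icc (y+1) n := by simp
    rw [hsplit, Finset.sum_insert hnm]
    set S := ∑ j ∈ Finset.Icc (y+1) n, ((V j).card : ℝ) with hS
    have hS0 : 0 ≤ S := Finset.sum_nonneg fun j _ => by positivity
    rcases eq_or_lt_of_le hS0 with h0 | h0
    · have hy0 : (0:ℝ) ≤ (V y).card := by positivity
      rw [← h0]; linarith
    · -- some term is positive, so some V j nonempty
      have : ∃ j ∈ Finset.Icc (y+1) n, (V j).Nonempty := by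
        by_contra hcon
        push_neg at hcon
        have : S = 0 := Finset.sum_eq_zero fun j hj => by
          simp [hcon j hj]
        linarith
      obtain ⟨j, hj, hjne⟩ := this
      have hj' : j ∈ Finset.Icc 1 n := by
        simp only [Finset.mem_Icc] at hj ⊢; omega
      have hd1 := hdelta1 j hj' hjne
      have hcge : (1:ℝ) ≤ 1 / (δ - ε) := by
        rw [le_div_iff₀ hde]; linarith
      have : S ≤ (1 / (δ - ε)) * S := by nlinarith
      linarith
  | succ i ih =>
    have hi' : i ≤ y - x - 1 := by omega
    have key := ih hi'
    have hk : y - (i+1) ∈ Finset.Icc (x+1) (y-1) := by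
      simp only [Finset.mem_Icc]; omega
    have hkk : y - (i+1) + 1 = y - i := by omega
    have hsm := hsmall _ hk
    rw [hkk] at hsm
    have hkn : y - (i+1) ≤ n := by omega
    have hsplit : Finset.Icc (y - (i+1)) n = insert (y - (i+1)) (Finset.Icc (y - i) n) := by
      ext a; simp only [Finset.mem_Icc, Finset.mem_insert]; omega
    have hnm : y - (i+1) ∉ Finset.Icc (y - i) n := by
      simp only [Finset.mem_Icc]; omega
    rw [hsplit, Finset.sum_insert hnm]
    have hy0 : (0:ℝ) ≤ (V y).card := by positivity
    have hpow : (0:ℝ) ≤ (1 + 1 / (δ - ε)) ^ i := by positivity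
    calc ((V (y - (i+1))).card : ℝ) + ∑ j ∈ Finset.Icc (y - i) n, ((V j).card : ℝ)
        ≤ (1 / (δ - ε)) * ∑ j ∈ Finset.Icc (y - i) n, ((V j).card : ℝ)
          + ∑ j ∈ Finset.Icc (y - i) n, ((V j).card : ℝ) := by linarith
      _ = (1 + 1 / (δ - ε)) * ∑ j ∈ Finset.Icc (y - i) n, ((V j).card : ℝ) := by ring
      _ ≤ (1 + 1 / (δ - ε)) * (2 * (1 + 1 / (δ - ε)) ^ i * (V y).card) := by
          apply mul_le_mul_of_nonneg_left key (by linarith)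
      _ = 2 * (1 + 1 / (δ - ε)) ^ (i+1) * (V y).card := by ring
end

section
/- Let V₁, ..., Vₙ be finite sets with |V₁| ≥ ... ≥ |Vₙ|, let 0 < ε < δ < 1, c_ε = 1/(δ−ε), and suppose y is an ε-large index and each of x+1, ..., y−1 is ε-small (0 ≤ x < y ≤ n). Then |V_y| ≥ (1/(2(1+c_ε)^{y−x−1})) · ∑_{j=x+1}^{y} |V_j|. -/
theorem stmt_4 {α : Type*} [DecidableEq α] (n : ℕ) (δ ε : ℝ)
    (hε : 0 < ε) (hεδ : ε < δ) (hδ : δ < 1)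
    (V : ℕ → Finset α)
    (hmono : ∀ i ∈ Finset.Icc 1 n, ∀ j ∈ Finset.Icc 1 n, i ≤ j →
      (V j).card ≤ (V i).card)
    (x y : ℕ) (hxy : x < y) (hyn : y ≤ n)
    (hlarge : (1 / (δ - ε)) * ∑ j ∈ Finset.Icc (y + 1) n, ((V j).card : ℝ) ≤ (V y).card)
    (hsmall : ∀ k ∈ Finset.Icc (x + 1) (y - 1),
      ((V k).card : ℝ) < (1 / (δ - ε)) * ∑ j ∈ Finset.Icc (k + 1) n, ((V j).card : ℝ)) :
    (1 / (2 * (1 + 1 / (δ - ε)) ^ (y - x - 1))) * ∑ j ∈ Finset.Icc (x + 1) y, ((V j).card : ℝ)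
      ≤ (V y).card := by
  have hδε : (0:ℝ) < δ - ε := by linarith
  set c : ℝ := 1 / (δ - ε) with hc
  have hc1 : 1 ≤ c := by
    rw [hc, le_div_iff₀ hδε]; linarith
  have hc0 : (0:ℝ) < c := lt_of_lt_of_le one_pos hc1
  set S : ℕ → ℝ := fun k => ∑ j ∈ Finset.Icc k n, ((V j).card : ℝ) with hS
  have hSnn : ∀ k, 0 ≤ S k := fun k => Finset.sum_nonneg (fun j _ => Nat.cast_nonneg _)
  have hstep : ∀ k, k ≤ n → S k = ((V k).card : ℝ) + S (k+1) := by
    intro k hk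
    simp only [hS]
    rw [Finset.Icc_eq_cons_Ioc hk, Finset.sum_cons, ← Finset.Icc_add_one_left_eq_Ioc]
  have key : ∀ m k, k + m = y → x + 1 ≤ k → S k ≤ (1+c)^m * S y := by
    intro m
    induction m with
    | zero =>
      intro k hk _
      have : k = y := by omega
      simp [this]
    | succ m ih =>
      intro k hk hxk
      have hkn : k ≤ n := by omega
      have hsm := hsmall k (Finset.mem_Icc.mpr ⟨hxk, by omega⟩)
      have hsm' : ((V k).card : ℝ) ≤ c * S (k+1) := le_of_lt hsm
      have h2 := ih (k+1) (by omega) (by omega)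
      have h1 : S k ≤ (1+c) * S (k+1) := by
        rw [hstep k hkn]; nlinarith [hSnn (k+1)]
      calc S k ≤ (1+c) * S (k+1) := h1
        _ ≤ (1+c) * ((1+c)^m * S y) := by
            apply mul_le_mul_of_nonneg_left h2 (by linarith)
        _ = (1+c)^(m+1) * S y := by ring
  have hy' : S (y+1) ≤ ((V y).card : ℝ) := by
    have h := hlarge
    nlinarith [hSnn (y+1)]
  have hSy : S y ≤ 2 * ((V y).card : ℝ) := by
    rw [hstep y hyn]; linarith
  have hsum : ∑ j ∈ Finset.Icc (x+1) y, ((V j).card:ℝ) ≤ S (x+1) :=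
    Finset.sum_le_sum_of_subset_of_nonneg (Finset.Icc_subset_Icc_right hyn)
      (fun _ _ _ => Nat.cast_nonneg _)
  have hkey := key (y - x - 1) (x+1) (by omega) le_rfl
  have hpow : (0:ℝ) < (1+c)^(y-x-1) := pow_pos (by linarith) _
  rw [one_div, inv_mul_le_iff₀ (by positivity)]
  nlinarith [hkey, hsum, mul_le_mul_of_nonneg_left hSy hpow.le]
end
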